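/- Let B be a reduced local ring with maximal ideal M such that B/M is uncountable, and let Q₁, Q₂ be distinct minimal prime ideals of B. Let R be an infinite subring of B with |R| < |B/M| and R ∩ Q₁ = R ∩ Q₂. Let b ∈ B, let z ∈ B with z ∉ Q₁ and z ∉ Q₂, and let J be an ideal of B with J ⊄ Q₁ and J ⊄ Q₂. Then there exists w ∈ J such that the subring R[b + zw] of B satisfies R[b+zw] ∩ Q₁ = R[b+zw] ∩ Q₂ and |R[b+zw]| = |R|. -/

import Mathlib

open Polynomial

/-- Root sets of composites with a nondegenerate linear polynomial are finite. -/
lemma aux_finite {K : Type*} [CommRing K] [IsDomain K] (c u : K) (hu : u ≠ 0) (f : K[X]) :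
    {t : K | (f.comp (C c + C u * X)).eval t = 0 ∧ f ≠ 0}.Finite := by
  rcases eq_or_ne f 0 with h | h
  · simp [h]
  · have hq : f.comp (C c + C u * X) ≠ 0 := by
      intro h0
      rcases (comp_eq_zero_iff).mp h0 with h1 | ⟨_, h2⟩
      · exact h h1
      · apply hu
        have := congrArg (fun p => Polynomial.coeff p 1) h2
        simpa using this
    exact (Polynomial.finite_setOf_isRoot hq).subset fun t ht => ht.1

/-- Key: if `lam` avoids the bad cosets for prime `Q`, then
`P (b + z (lam a)) ∈ Q` iff `P` reduces to zero mod `Q`. -/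
lemma aux_key {B : Type*} [CommRing B] (Q Mx : Ideal B) (hQM : Q ≤ Mx)
    (z a lam b : B) (P : B[X])
    (hlam : Ideal.Quotient.mk Mx lam ∉ (Ideal.Quotient.factor hQM) ''
      {t : B ⧸ Q |
        ((P.map (Ideal.Quotient.mk Q)).comp
          (C (Ideal.Quotient.mk Q b) + C (Ideal.Quotient.mk Q (z * a)) * X)).eval t = 0 ∧
        P.map (Ideal.Quotient.mk Q) ≠ 0}) :
    (P.eval (b + z * (lam * a)) ∈ Q ↔ P.map (Ideal.Quotient.mk Q) = 0) := by
  have hcast : ∀ x : B, (P.map (Ideal.Quotient.mk Q)).eval (Ideal.Quotient.mk Q x)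
      = Ideal.Quotient.mk Q (P.eval x) := by
    intro x
    rw [Polynomial.eval_map, Polynomial.eval₂_at_apply]
  constructor
  · intro h
    by_contra hne0
    apply hlam
    refine ⟨Ideal.Quotient.mk Q lam, ⟨?_, hne0⟩, Ideal.Quotient.factor_mk hQM lam⟩
    have : (C (Ideal.Quotient.mk Q b) + C (Ideal.Quotient.mk Q (z * a)) * X).eval
        (Ideal.Quotient.mk Q lam) = Ideal.Quotient.mk Q (b + z * (lam * a)) := by
      simp [map_add, map_mul]
      ring
    rw [Polynomial.eval_comp, this, hcast]
    rwa [Ideal.Quotient.eq_zero_iff_mem]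
  · intro h
    have := hcast (b + z * (lam * a))
    rw [h] at this
    simp only [Polynomial.eval_zero] at this
    rwa [Eq.comm, Ideal.Quotient.eq_zero_iff_mem] at this

/-- Adjoining `b + zw` for a suitable `w ∈ J` preserves being an MG-subring. -/
theorem stmt_3 (B : Type*) [CommRing B] [IsNoetherianRing B] [IsLocalRing B] [IsReduced B]
    [Uncountable (B ⧸ IsLocalRing.maximalIdeal B)]
    (Q₁ Q₂ : Ideal B) (hQ₁ : Q₁ ∈ minimalPrimes B) (hQ₂ : Q₂ ∈ minimalPrimes B)
    (hne : Q₁ ≠ Q₂)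
    (R : Subring B) [Infinite ↥R]
    (hcard : Cardinal.mk ↥R < Cardinal.mk (B ⧸ IsLocalRing.maximalIdeal B))
    (hglue : ∀ y ∈ R, y ∈ Q₁ ↔ y ∈ Q₂)
    (b z : B) (hz₁ : z ∉ Q₁) (hz₂ : z ∉ Q₂)
    (J : Ideal B) (hJ₁ : ¬ J ≤ Q₁) (hJ₂ : ¬ J ≤ Q₂) :
    ∃ w ∈ J,
      (∀ y ∈ Subring.closure (insert (b + z * w) (R : Set B)), (y ∈ Q₁ ↔ y ∈ Q₂)) ∧
      Cardinal.mk ↥(Subring.closure (insert (b + z * w) (R : Set B))) = Cardinal.mk ↥R := by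
  classical
  haveI hP₁ : Q₁.IsPrime := hQ₁.1.1
  haveI hP₂ : Q₂.IsPrime := hQ₂.1.1
  set Mx := IsLocalRing.maximalIdeal B with hMx
  have hQM₁ : Q₁ ≤ Mx := IsLocalRing.le_maximalIdeal hP₁.ne_top
  have hQM₂ : Q₂ ≤ Mx := IsLocalRing.le_maximalIdeal hP₂.ne_top
  -- choose a ∈ J avoiding both primes
  obtain ⟨a₁, ha₁J, ha₁⟩ := SetLike.not_le_iff_exists.mp hJ₁
  obtain ⟨a₂, ha₂J, ha₂⟩ := SetLike.not_le_iff_exists.mp hJ₂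
  obtain ⟨a, haJ, ha1, ha2⟩ : ∃ a ∈ J, a ∉ Q₁ ∧ a ∉ Q₂ := by
    by_cases h12 : a₁ ∈ Q₂
    · by_cases h21 : a₂ ∈ Q₁
      · refine ⟨a₁ + a₂, J.add_mem ha₁J ha₂J, ?_, ?_⟩
        · intro h; exact ha₁ (by simpa using Q₁.sub_mem h h21)
        · intro h; exact ha₂ (by simpa using Q₂.sub_mem h h12)
      · exact ⟨a₂, ha₂J, h21, ha₂⟩
    · exact ⟨a₁, ha₁J, ha₁, h12⟩
  -- polynomials over R, mapped into B
  let F : (↥R)[X] → B[X] := fun p => p.map (R.subtype)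
  -- bad sets
  let S₁ : (↥R)[X] → Set (B ⧸ Mx) := fun p =>
    (Ideal.Quotient.factor hQM₁) ''
      {t : B ⧸ Q₁ |
        (((F p).map (Ideal.Quotient.mk Q₁)).comp
          (C (Ideal.Quotient.mk Q₁ b) + C (Ideal.Quotient.mk Q₁ (z * a)) * X)).eval t = 0 ∧
        (F p).map (Ideal.Quotient.mk Q₁) ≠ 0}
  let S₂ : (↥R)[X] → Set (B ⧸ Mx) := fun p =>
    (Ideal.Quotient.factor hQM₂) ''
      {t : B ⧸ Q₂ |
        (((F p).map (Ideal.Quotient.mk Q₂)).comp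
          (C (Ideal.Quotient.mk Q₂ b) + C (Ideal.Quotient.mk Q₂ (z * a)) * X)).eval t = 0 ∧
        (F p).map (Ideal.Quotient.mk Q₂) ≠ 0}
  have hfin : ∀ p : (↥R)[X], (S₁ p ∪ S₂ p).Finite := by
    intro p
    have hu₁ : Ideal.Quotient.mk Q₁ (z * a) ≠ 0 := by
      rw [Ne, Ideal.Quotient.eq_zero_iff_mem]
      intro h
      rcases hP₁.mem_or_mem h with h | h
      exacts [hz₁ h, ha1 h]
    have hu₂ : Ideal.Quotient.mk Q₂ (z * a) ≠ 0 := by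
      rw [Ne, Ideal.Quotient.eq_zero_iff_mem]
      intro h
      rcases hP₂.mem_or_mem h with h | h
      exacts [hz₂ h, ha2 h]
    exact ((aux_finite _ _ hu₁ _).image _).union ((aux_finite _ _ hu₂ _).image _)
  -- the union of all bad sets is small
  let Bad : Set (B ⧸ Mx) := ⋃ p : (↥R)[X], (S₁ p ∪ S₂ p)
  have hBadlt : Cardinal.mk ↥Bad < Cardinal.mk (B ⧸ Mx) := by
    have h1 : Cardinal.mk ↥Bad ≤ Cardinal.mk ((↥R)[X]) * ⨆ p : (↥R)[X], Cardinal.mk ↥(S₁ p ∪ S₂ p) :=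
      Cardinal.mk_iUnion_le _
    have h2 : (⨆ p : (↥R)[X], Cardinal.mk ↥(S₁ p ∪ S₂ p)) ≤ Cardinal.aleph0 := by
      refine ciSup_le' fun p => ?_
      haveI := (hfin p).countable.to_subtype
      exact Cardinal.mk_le_aleph0
    have h3 : Cardinal.mk ((↥R)[X]) = Cardinal.mk ↥R := by
      rw [Polynomial.cardinalMk_eq_max]
      exact max_eq_left (Cardinal.aleph0_le_mk ↥R)
    have h4 : Cardinal.mk ((↥R)[X]) * Cardinal.aleph0 = Cardinal.mk ↥R := by
      rw [h3]
      exact Cardinal.mul_eq_left (Cardinal.aleph0_le_mk ↥R) (Cardinal.aleph0_le_mk ↥R)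
        (by simp [Cardinal.aleph0_ne_zero])
    calc Cardinal.mk ↥Bad ≤ Cardinal.mk ((↥R)[X]) * ⨆ p : (↥R)[X], Cardinal.mk ↥(S₁ p ∪ S₂ p) := h1
      _ ≤ Cardinal.mk ((↥R)[X]) * Cardinal.aleph0 := by
          exact mul_le_mul_right h2 _
      _ = Cardinal.mk ↥R := h4
      _ < Cardinal.mk (B ⧸ Mx) := hcard
  -- pick a good residue and a representative
  have hne_univ : Bad ≠ Set.univ := by
    intro h
    rw [h, Cardinal.mk_univ] at hBadlt
    exact absurd hBadlt (lt_irrefl _)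
  obtain ⟨lamBar, hlamBar⟩ := (Set.ne_univ_iff_exists_notMem Bad).mp hne_univ
  obtain ⟨lam, rfl⟩ := Ideal.Quotient.mk_surjective lamBar
  have hlam₁ : ∀ p : (↥R)[X], Ideal.Quotient.mk Mx lam ∉ S₁ p := fun p h =>
    hlamBar (Set.mem_iUnion.mpr ⟨p, Or.inl h⟩)
  have hlam₂ : ∀ p : (↥R)[X], Ideal.Quotient.mk Mx lam ∉ S₂ p := fun p h =>
    hlamBar (Set.mem_iUnion.mpr ⟨p, Or.inr h⟩)
  refine ⟨lam * a, J.mul_mem_left lam haJ, ?_, ?_⟩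
  -- every element of the closure is a polynomial in b + z (lam a)
  all_goals
    have hle : Subring.closure (insert (b + z * (lam * a)) (R : Set B)) ≤
        (Polynomial.eval₂RingHom R.subtype (b + z * (lam * a))).range := by
      rw [Subring.closure_le]
      rintro y (rfl | hy)
      · exact ⟨X, Polynomial.eval₂_X _ _⟩
      · exact ⟨C ⟨y, hy⟩, Polynomial.eval₂_C _ _⟩
  · -- glueing property
    intro y hy
    obtain ⟨p, hp⟩ := hle hy
    have hpev : (F p).eval (b + z * (lam * a)) = y := by
      simpa [F, Polynomial.eval_map] using hp
    have hkey₁ := aux_key Q₁ Mx hQM₁ z a lam b (F p) (hlam₁ p)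
    have hkey₂ := aux_key Q₂ Mx hQM₂ z a lam b (F p) (hlam₂ p)
    rw [hpev] at hkey₁ hkey₂
    have hzero : ∀ (Q : Ideal B), ((F p).map (Ideal.Quotient.mk Q) = 0 ↔
        ∀ n, ((p.coeff n : B) ∈ Q)) := by
      intro Q
      constructor
      · intro h n
        have := congrArg (fun q => Polynomial.coeff q n) h
        simp only [Polynomial.coeff_map, Polynomial.coeff_zero] at this
        rw [← Ideal.Quotient.eq_zero_iff_mem]
        simpa [F, Polynomial.coeff_map] using this
      · intro h
        ext n
        simp only [Polynomial.coeff_map, Polynomial.coeff_zero]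
        rw [Ideal.Quotient.eq_zero_iff_mem]
        simpa [F, Polynomial.coeff_map] using h n
    rw [hkey₁, hkey₂, hzero Q₁, hzero Q₂]
    exact forall_congr' fun n => hglue _ (SetLike.coe_mem _)
  · -- cardinality
    have hsub : (Subring.closure (insert (b + z * (lam * a)) (R : Set B)) : Set B) ⊆
        Set.range (Polynomial.eval₂ R.subtype (b + z * (lam * a))) := by
      intro x hx
      obtain ⟨p, hp⟩ := hle hx
      exact ⟨p, hp⟩
    have hup : Cardinal.mk ↥(Subring.closure (insert (b + z * (lam * a)) (R : Set B))) ≤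
        Cardinal.mk ↥R := by
      calc Cardinal.mk ↥(Subring.closure (insert (b + z * (lam * a)) (R : Set B)))
          ≤ Cardinal.mk ↥(Set.range (Polynomial.eval₂ R.subtype (b + z * (lam * a)))) :=
            Cardinal.mk_le_mk_of_subset hsub
        _ ≤ Cardinal.mk ((↥R)[X]) := Cardinal.mk_range_le
        _ = Cardinal.mk ↥R := by
            rw [Polynomial.cardinalMk_eq_max]
            exact max_eq_left (Cardinal.aleph0_le_mk ↥R)
    have hdown : Cardinal.mk ↥R ≤
        Cardinal.mk ↥(Subring.closure (insert (b + z * (lam * a)) (R : Set B))) := by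
      apply Cardinal.mk_le_mk_of_subset
      exact fun x hx => Subring.subset_closure (Set.mem_insert_iff.mpr (Or.inr hx))
    exact le_antisymm hup hdown
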